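/- The convolution of two wrapped Cauchy densities is wrapped Cauchy: ∫_{−π}^{π} wc(θ; μ₁, ρ₁)·wc(τ−θ; μ₂, ρ₂) dθ = wc(τ; μ₁+μ₂, ρ₁ρ₂), where wc(θ; μ, ρ) = (1/2π)(1−ρ²)/(1+ρ²−2ρcos(θ−μ)). -/

import Mathlib

open Real intervalIntegral MeasureTheory

/-- The wrapped Cauchy density `WC(μ, ρ)`. -/
noncomputable def wc (θ μ ρ : ℝ) : ℝ :=
  (1 / (2 * Real.pi)) * (1 - ρ ^ 2) / (1 + ρ ^ 2 - 2 * ρ * Real.cos (θ - μ))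

/-- The (unnormalized) Poisson kernel. -/
noncomputable def pker (ρ x : ℝ) : ℝ := (1 - ρ ^ 2) / (1 + ρ ^ 2 - 2 * ρ * Real.cos x)

lemma denom_pos {ρ : ℝ} (h0 : 0 ≤ ρ) (h1 : ρ < 1) (x : ℝ) :
    0 < 1 + ρ ^ 2 - 2 * ρ * Real.cos x := by
  nlinarith [Real.cos_le_one x, sq_nonneg (1 - ρ), mul_nonneg h0 (sub_nonneg.2 (Real.cos_le_one x))]

lemma poisson_hasSum {ρ : ℝ} (h0 : 0 ≤ ρ) (h1 : ρ < 1) (x : ℝ) :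
    HasSum (fun n : ℕ => 2 * ρ ^ (n + 1) * Real.cos (((n : ℝ) + 1) * x)) (pker ρ x - 1) := by
  set z : ℂ := (ρ : ℂ) * Complex.exp (x * Complex.I) with hz
  have hnorm : ‖z‖ < 1 := by
    rw [hz, norm_mul, Complex.norm_exp_ofReal_mul_I]
    simpa [abs_of_nonneg h0] using h1
  have hgeo : HasSum (fun n : ℕ => z ^ n) (1 - z)⁻¹ := hasSum_geometric_of_norm_lt_one hnorm
  have hshift : HasSum (fun n : ℕ => z ^ (n + 1)) ((1 - z)⁻¹ - 1) := by
    have := (hasSum_nat_add_iff' (f := fun n : ℕ => z ^ n) 1).mpr hgeo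
    simpa using this
  have h2 : HasSum (fun n : ℕ => ((2 : ℂ) * z ^ (n + 1)).re)
      ((2 * ((1 - z)⁻¹ - 1)).re) := (hshift.mul_left 2).mapL Complex.reCLM
  have hre : z.re = ρ * Real.cos x := by
    simp [hz, Complex.exp_mul_I, Complex.cos_ofReal_re, Complex.sin_ofReal_re]
  have him : z.im = ρ * Real.sin x := by
    simp [hz, Complex.exp_mul_I, Complex.cos_ofReal_re, Complex.sin_ofReal_re]
  have hterm : ∀ n : ℕ, ((2 : ℂ) * z ^ (n + 1)).re
      = 2 * ρ ^ (n + 1) * Real.cos (((n : ℝ) + 1) * x) := by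
    intro n
    have : z ^ (n + 1) = ((ρ ^ (n + 1) : ℝ) : ℂ) * Complex.exp ((((n : ℝ) + 1) * x : ℝ) * Complex.I) := by
      rw [hz, mul_pow, ← Complex.exp_nat_mul]
      push_cast
      ring_nf
    rw [this]
    rw [show (2 : ℂ) * (((ρ ^ (n + 1) : ℝ)) * Complex.exp ((((n : ℝ) + 1) * x : ℝ) * Complex.I))
        = (((2 * ρ ^ (n + 1) : ℝ)) : ℂ) * Complex.exp ((((n : ℝ) + 1) * x : ℝ) * Complex.I) by
      push_cast; ring]
    rw [Complex.re_ofReal_mul, Complex.exp_ofReal_mul_I_re]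
  have hval : ((2 : ℂ) * ((1 - z)⁻¹ - 1)).re = pker ρ x - 1 := by
    unfold pker
    have hns : Complex.normSq (1 - z) = 1 + ρ ^ 2 - 2 * ρ * Real.cos x := by
      rw [Complex.normSq_apply]
      simp [Complex.sub_re, Complex.sub_im, hre, him]
      nlinarith [Real.sin_sq_add_cos_sq x]
    have hD := denom_pos h0 h1 x
    have : ((1 - z)⁻¹).re = (1 - ρ * Real.cos x) / (1 + ρ ^ 2 - 2 * ρ * Real.cos x) := by
      rw [Complex.inv_re, hns]
      simp [Complex.sub_re, hre]
    simp [Complex.mul_re, Complex.sub_re, this]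
    field_simp
    ring
  rw [← hval]
  exact (funext hterm ▸ h2)

lemma integral_cos_linear {k : ℤ} (hk : k ≠ 0) (c : ℝ) :
    ∫ θ in (-π)..π, Real.cos ((k : ℝ) * θ + c) = 0 := by
  have hk' : (k : ℝ) ≠ 0 := Int.cast_ne_zero.mpr hk
  rw [intervalIntegral.integral_comp_mul_add Real.cos hk' c, integral_cos]
  have h2 : Real.sin ((k : ℝ) * π + c) - Real.sin ((k : ℝ) * (-π) + c) = 0 := by
    rw [Real.sin_sub_sin]
    rw [show ((k : ℝ) * π + c - ((k : ℝ) * (-π) + c)) / 2 = (k : ℝ) * π by ring,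
      Real.sin_int_mul_pi]
    ring
  rw [h2, smul_zero]

lemma integral_cos_cos (n m : ℕ) (α β : ℝ) :
    ∫ θ in (-π)..π, Real.cos (((n : ℝ) + 1) * (θ - α)) * Real.cos (((m : ℝ) + 1) * (β - θ))
      = if n = m then π * Real.cos (((n : ℝ) + 1) * (β - α)) else 0 := by
  have key : ∀ θ : ℝ, Real.cos (((n : ℝ) + 1) * (θ - α)) * Real.cos (((m : ℝ) + 1) * (β - θ))
      = (Real.cos ((((n : ℤ) - m : ℤ) : ℝ) * θ + (((m : ℝ) + 1) * β - ((n : ℝ) + 1) * α))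
        + Real.cos ((((n : ℤ) + m + 2 : ℤ) : ℝ) * θ
            + (-((n : ℝ) + 1) * α - ((m : ℝ) + 1) * β))) / 2 := by
    intro θ
    rw [show ((((n : ℤ) - m : ℤ) : ℝ) * θ + (((m : ℝ) + 1) * β - ((n : ℝ) + 1) * α))
        = (((n : ℝ) + 1) * (θ - α)) + (((m : ℝ) + 1) * (β - θ)) by push_cast; ring,
      show ((((n : ℤ) + m + 2 : ℤ) : ℝ) * θ + (-((n : ℝ) + 1) * α - ((m : ℝ) + 1) * β))
        = (((n : ℝ) + 1) * (θ - α)) - (((m : ℝ) + 1) * (β - θ)) by push_cast; ring,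
      Real.cos_add, Real.cos_sub]
    ring
  simp only [key]
  have hi1 : IntervalIntegrable (fun θ : ℝ =>
      Real.cos ((((n : ℤ) - m : ℤ) : ℝ) * θ + (((m : ℝ) + 1) * β - ((n : ℝ) + 1) * α)))
      MeasureTheory.volume (-π) π := (Real.continuous_cos.comp (by continuity)).intervalIntegrable _ _
  have hi2 : IntervalIntegrable (fun θ : ℝ =>
      Real.cos ((((n : ℤ) + m + 2 : ℤ) : ℝ) * θ + (-((n : ℝ) + 1) * α - ((m : ℝ) + 1) * β)))
      MeasureTheory.volume (-π) π := (Real.continuous_cos.comp (by continuity)).intervalIntegrable _ _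
  rw [intervalIntegral.integral_div, intervalIntegral.integral_add hi1 hi2]
  rw [integral_cos_linear (by omega : ((n : ℤ) + m + 2) ≠ 0)]
  by_cases h : n = m
  · subst h
    simp only [if_pos rfl]
    rw [show (((n : ℤ) - n : ℤ) : ℝ) = 0 by push_cast; ring]
    simp only [zero_mul, zero_add, intervalIntegral.integral_const]
    rw [show (((n : ℝ) + 1) * β - ((n : ℝ) + 1) * α) = ((n : ℝ) + 1) * (β - α) by ring]
    rw [smul_eq_mul]
    ring_nf
    simp
  · rw [if_neg h, integral_cos_linear (by omega : ((n : ℤ) - m) ≠ 0)]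
    ring

lemma interchange {ι : Type*} [Countable ι] (f : ι → ℝ → ℝ) (g : ℝ → ℝ) (C : ι → ℝ)
    (hg : ∀ θ, HasSum (fun i => f i θ) (g θ))
    (hc : ∀ i, Continuous (f i)) (hb : ∀ i θ, |f i θ| ≤ C i) (hC : Summable C) :
    ∫ θ in (-π)..π, g θ = ∑' i, ∫ θ in (-π)..π, f i θ := by
  rw [intervalIntegral.integral_congr (g := fun θ => ∑' i, f i θ)
    (fun θ _ => ((hg θ).tsum_eq).symm)]
  have hle : -π ≤ π := by linarith [Real.pi_pos]
  simp only [intervalIntegral.integral_of_le hle]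
  have hvol : (MeasureTheory.volume (Set.Ioc (-π) π)).toReal = 2 * π := by
    rw [Real.volume_Ioc, ENNReal.toReal_ofReal (by linarith [Real.pi_pos])]; ring
  have hint : ∀ i, Integrable (f i) (volume.restrict (Set.Ioc (-π) π)) :=
    fun i => (hc i).integrableOn_Ioc
  refine (MeasureTheory.integral_tsum_of_summable_integral_norm hint ?_).symm
  apply Summable.of_nonneg_of_le
      (fun i => integral_nonneg fun θ => norm_nonneg _)
      (fun i => ?_) (hC.mul_left (2 * π))
  calc ∫ θ in Set.Ioc (-π) π, ‖f i θ‖ ≤ ∫ _θ in Set.Ioc (-π) π, C i := by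
        apply integral_mono (hint i).norm (integrable_const _)
        intro θ; exact hb i θ
    _ = 2 * π * C i := by
        rw [MeasureTheory.integral_const, measureReal_def, Measure.restrict_apply_univ, hvol, smul_eq_mul]

lemma abs_term_le {ρ : ℝ} (h0 : 0 ≤ ρ) (k : ℕ) (c : ℝ) :
    |2 * ρ ^ k * Real.cos c| ≤ 2 * ρ ^ k := by
  rw [abs_mul]
  calc |2 * ρ ^ k| * |Real.cos c| ≤ |2 * ρ ^ k| * 1 :=
        mul_le_mul_of_nonneg_left (Real.abs_cos_le_one c) (abs_nonneg _)
    _ = 2 * ρ ^ k := by rw [mul_one, abs_of_nonneg (by positivity)]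

lemma geom_summable {ρ : ℝ} (h0 : 0 ≤ ρ) (h1 : ρ < 1) (c : ℝ) :
    Summable (fun n : ℕ => c * ρ ^ (n + 1)) := by
  have := (summable_geometric_of_lt_one h0 h1).mul_left (c * ρ)
  exact this.congr fun n => by rw [pow_succ]; ring


set_option maxHeartbeats 1600000 in
/-- The convolution of two wrapped Cauchy densities is wrapped Cauchy:
`WC(μ₁, ρ₁) * WC(μ₂, ρ₂) = WC(μ₁+μ₂, ρ₁ρ₂)`. -/
theorem wrappedCauchy_convolution (μ₁ μ₂ ρ₁ ρ₂ : ℝ)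
    (hρ₁ : ρ₁ ∈ Set.Ico (0 : ℝ) 1) (hρ₂ : ρ₂ ∈ Set.Ico (0 : ℝ) 1) (τ : ℝ) :
    ∫ θ in (-Real.pi)..Real.pi, wc θ μ₁ ρ₁ * wc (τ - θ) μ₂ ρ₂
      = wc τ (μ₁ + μ₂) (ρ₁ * ρ₂) := by
  obtain ⟨h10, h11⟩ := hρ₁
  obtain ⟨h20, h21⟩ := hρ₂
  have hπ := Real.pi_pos
  have h30 : 0 ≤ ρ₁ * ρ₂ := mul_nonneg h10 h20
  have h31 : ρ₁ * ρ₂ < 1 := by nlinarith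
  -- continuity of the two kernels
  have hc1 : Continuous fun θ : ℝ => pker ρ₁ (θ - μ₁) := by
    unfold pker
    exact continuous_const.div (by continuity) fun θ => (denom_pos h10 h11 (θ - μ₁)).ne'
  have hc2 : Continuous fun θ : ℝ => pker ρ₂ (τ - μ₂ - θ) := by
    unfold pker
    exact continuous_const.div (by continuity) fun θ => (denom_pos h20 h21 (τ - μ₂ - θ)).ne'
  -- rewrite integrand
  have hwc : ∀ θ : ℝ, wc θ μ₁ ρ₁ * wc (τ - θ) μ₂ ρ₂
      = (1 / (2 * π)) ^ 2 * (pker ρ₁ (θ - μ₁) * pker ρ₂ (τ - μ₂ - θ)) := by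
    intro θ
    unfold wc pker
    rw [show τ - θ - μ₂ = τ - μ₂ - θ by ring]
    ring
  simp only [hwc]
  rw [intervalIntegral.integral_const_mul]
  -- the four pieces
  have h1val : ∫ _θ in (-π)..π, (1 : ℝ) = 2 * π := by
    rw [intervalIntegral.integral_const, smul_eq_mul]; ring
  have hIA : ∫ θ in (-π)..π, (pker ρ₁ (θ - μ₁) - 1) = 0 := by
    rw [interchange (fun (n : ℕ) (θ : ℝ) => 2 * ρ₁ ^ (n + 1) * Real.cos (((n : ℝ) + 1) * (θ - μ₁)))
      (fun θ => pker ρ₁ (θ - μ₁) - 1) (fun n => 2 * ρ₁ ^ (n + 1))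
      (fun θ => poisson_hasSum h10 h11 (θ - μ₁))
      (fun n => by fun_prop) (fun n θ => abs_term_le h10 _ _) (geom_summable h10 h11 2)]
    have hz : ∀ n : ℕ, ∫ θ in (-π)..π, 2 * ρ₁ ^ (n + 1) * Real.cos (((n : ℝ) + 1) * (θ - μ₁)) = 0 := by
      intro n
      simp only [show ∀ θ : ℝ, ((n : ℝ) + 1) * (θ - μ₁)
          = (((n : ℤ) + 1 : ℤ) : ℝ) * θ + (-(((n : ℝ) + 1) * μ₁)) from fun θ => by push_cast; ring]
      rw [intervalIntegral.integral_const_mul,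
        integral_cos_linear (by omega : ((n : ℤ) + 1) ≠ 0), mul_zero]
    simp only [hz, tsum_zero]
  have hIB : ∫ θ in (-π)..π, (pker ρ₂ (τ - μ₂ - θ) - 1) = 0 := by
    rw [interchange (fun (m : ℕ) (θ : ℝ) => 2 * ρ₂ ^ (m + 1) * Real.cos (((m : ℝ) + 1) * (τ - μ₂ - θ)))
      (fun θ => pker ρ₂ (τ - μ₂ - θ) - 1) (fun m => 2 * ρ₂ ^ (m + 1))
      (fun θ => poisson_hasSum h20 h21 (τ - μ₂ - θ))
      (fun m => by fun_prop) (fun m θ => abs_term_le h20 _ _) (geom_summable h20 h21 2)]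
    have hz : ∀ m : ℕ, ∫ θ in (-π)..π, 2 * ρ₂ ^ (m + 1) * Real.cos (((m : ℝ) + 1) * (τ - μ₂ - θ)) = 0 := by
      intro m
      simp only [show ∀ θ : ℝ, ((m : ℝ) + 1) * (τ - μ₂ - θ)
          = ((-(m : ℤ) - 1 : ℤ) : ℝ) * θ + (((m : ℝ) + 1) * (τ - μ₂)) from fun θ => by push_cast; ring]
      rw [intervalIntegral.integral_const_mul,
        integral_cos_linear (by omega : (-(m : ℤ) - 1) ≠ 0), mul_zero]
    simp only [hz, tsum_zero]
  -- norm-summability of the two families (pointwise in θ)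
  have hna : ∀ θ : ℝ, Summable fun n : ℕ =>
      ‖2 * ρ₁ ^ (n + 1) * Real.cos (((n : ℝ) + 1) * (θ - μ₁))‖ := by
    intro θ
    apply Summable.of_nonneg_of_le (fun n => norm_nonneg _)
      (fun n => by rw [Real.norm_eq_abs]; exact abs_term_le h10 _ _) (geom_summable h10 h11 2)
  have hnb : ∀ θ : ℝ, Summable fun m : ℕ =>
      ‖2 * ρ₂ ^ (m + 1) * Real.cos (((m : ℝ) + 1) * (τ - μ₂ - θ))‖ := by
    intro θ
    apply Summable.of_nonneg_of_le (fun m => norm_nonneg _)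
      (fun m => by rw [Real.norm_eq_abs]; exact abs_term_le h20 _ _) (geom_summable h20 h21 2)
  have hnorm1 : Summable (fun n : ℕ => ‖2 * ρ₁ ^ (n + 1)‖) :=
    (geom_summable h10 h11 2).congr fun n => (norm_of_nonneg (by positivity)).symm
  have hnorm2 : Summable (fun m : ℕ => ‖2 * ρ₂ ^ (m + 1)‖) :=
    (geom_summable h20 h21 2).congr fun m => (norm_of_nonneg (by positivity)).symm
  have hCgeo : Summable (fun p : ℕ × ℕ => (2 * ρ₁ ^ (p.1 + 1)) * (2 * ρ₂ ^ (p.2 + 1))) :=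
    summable_mul_of_summable_norm (f := fun n : ℕ => 2 * ρ₁ ^ (n + 1))
      (g := fun m : ℕ => 2 * ρ₂ ^ (m + 1)) hnorm1 hnorm2
  have hIAB : ∫ θ in (-π)..π, (pker ρ₁ (θ - μ₁) - 1) * (pker ρ₂ (τ - μ₂ - θ) - 1)
      = 2 * π * (pker (ρ₁ * ρ₂) (τ - μ₂ - μ₁) - 1) := by
    have hgp : ∀ θ : ℝ, HasSum (fun p : ℕ × ℕ =>
        (2 * ρ₁ ^ (p.1 + 1) * Real.cos (((p.1 : ℝ) + 1) * (θ - μ₁)))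
          * (2 * ρ₂ ^ (p.2 + 1) * Real.cos (((p.2 : ℝ) + 1) * (τ - μ₂ - θ))))
        ((pker ρ₁ (θ - μ₁) - 1) * (pker ρ₂ (τ - μ₂ - θ) - 1)) := by
      intro θ
      have hsum := summable_mul_of_summable_norm (hna θ) (hnb θ)
      have h := hsum.hasSum
      rw [← tsum_mul_tsum_of_summable_norm (hna θ) (hnb θ),
        (poisson_hasSum h10 h11 (θ - μ₁)).tsum_eq,
        (poisson_hasSum h20 h21 (τ - μ₂ - θ)).tsum_eq] at h
      exact h
    rw [interchange (fun p : ℕ × ℕ => fun θ : ℝ =>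
        (2 * ρ₁ ^ (p.1 + 1) * Real.cos (((p.1 : ℝ) + 1) * (θ - μ₁)))
          * (2 * ρ₂ ^ (p.2 + 1) * Real.cos (((p.2 : ℝ) + 1) * (τ - μ₂ - θ))))
      (fun θ => (pker ρ₁ (θ - μ₁) - 1) * (pker ρ₂ (τ - μ₂ - θ) - 1))
      (fun p : ℕ × ℕ => (2 * ρ₁ ^ (p.1 + 1)) * (2 * ρ₂ ^ (p.2 + 1)))
      hgp (fun p => by fun_prop)
      (fun p θ => by
        rw [abs_mul]
        exact mul_le_mul (abs_term_le h10 _ _) (abs_term_le h20 _ _) (abs_nonneg _)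
          (by positivity))
      hCgeo]
    -- value of each double integral
    have hval : ∀ p : ℕ × ℕ, (∫ θ in (-π)..π,
        (2 * ρ₁ ^ (p.1 + 1) * Real.cos (((p.1 : ℝ) + 1) * (θ - μ₁)))
          * (2 * ρ₂ ^ (p.2 + 1) * Real.cos (((p.2 : ℝ) + 1) * (τ - μ₂ - θ))))
        = if p.1 = p.2 then
            2 * π * (2 * (ρ₁ * ρ₂) ^ (p.1 + 1) * Real.cos (((p.1 : ℝ) + 1) * (τ - μ₂ - μ₁)))
          else 0 := by
      rintro ⟨n, m⟩
      simp only
      simp only [show ∀ θ : ℝ,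
          (2 * ρ₁ ^ (n + 1) * Real.cos (((n : ℝ) + 1) * (θ - μ₁)))
            * (2 * ρ₂ ^ (m + 1) * Real.cos (((m : ℝ) + 1) * (τ - μ₂ - θ)))
          = (2 * ρ₁ ^ (n + 1) * (2 * ρ₂ ^ (m + 1)))
            * (Real.cos (((n : ℝ) + 1) * (θ - μ₁)) * Real.cos (((m : ℝ) + 1) * ((τ - μ₂) - θ)))
        from fun θ => by ring_nf]
      rw [intervalIntegral.integral_const_mul, integral_cos_cos n m μ₁ (τ - μ₂)]
      by_cases h : n = m
      · subst h
        rw [if_pos rfl, if_pos rfl, mul_pow]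
        ring
      · rw [if_neg h, if_neg h, mul_zero]
    rw [tsum_congr hval]
    -- sum the diagonal
    have hCsum : Summable (fun p : ℕ × ℕ =>
        (4 * π * ρ₁ ^ (p.1 + 1)) * ρ₂ ^ (p.2 + 1)) :=
      summable_mul_of_summable_norm (f := fun n : ℕ => 4 * π * ρ₁ ^ (n + 1))
        (g := fun m : ℕ => ρ₂ ^ (m + 1))
        ((geom_summable h10 h11 (4 * π)).congr fun n =>
          (norm_of_nonneg (by positivity)).symm)
        ((geom_summable h20 h21 1).congr fun m => by
          rw [one_mul]; exact (norm_of_nonneg (by positivity)).symm)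
    have hbound : ∀ p : ℕ × ℕ,
        ‖if p.1 = p.2 then
            2 * π * (2 * (ρ₁ * ρ₂) ^ (p.1 + 1) * Real.cos (((p.1 : ℝ) + 1) * (τ - μ₂ - μ₁)))
          else 0‖ ≤ (4 * π * ρ₁ ^ (p.1 + 1)) * ρ₂ ^ (p.2 + 1) := by
      rintro ⟨n, m⟩
      by_cases h : n = m
      · subst h
        rw [if_pos rfl, Real.norm_eq_abs,
          abs_mul, abs_of_nonneg (by positivity : (0:ℝ) ≤ 2 * π)]
        calc 2 * π * |2 * (ρ₁ * ρ₂) ^ (n + 1) * Real.cos (((n : ℝ) + 1) * (τ - μ₂ - μ₁))|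
            ≤ 2 * π * (2 * (ρ₁ * ρ₂) ^ (n + 1)) :=
              mul_le_mul_of_nonneg_left (abs_term_le h30 _ _) (by positivity)
          _ = (4 * π * ρ₁ ^ (n + 1)) * ρ₂ ^ (n + 1) := by rw [mul_pow]; ring
      · simp only [if_neg h, norm_zero]
        positivity
    have hgsum : Summable (fun p : ℕ × ℕ =>
        if p.1 = p.2 then
          2 * π * (2 * (ρ₁ * ρ₂) ^ (p.1 + 1) * Real.cos (((p.1 : ℝ) + 1) * (τ - μ₂ - μ₁)))
        else 0) := Summable.of_norm_bounded hCsum hbound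
    have hinner : ∀ n : ℕ, Summable (fun m : ℕ =>
        if n = m then
          2 * π * (2 * (ρ₁ * ρ₂) ^ (n + 1) * Real.cos (((n : ℝ) + 1) * (τ - μ₂ - μ₁)))
        else 0) := by
      intro n
      have : (fun m : ℕ =>
          if n = m then
            2 * π * (2 * (ρ₁ * ρ₂) ^ (n + 1) * Real.cos (((n : ℝ) + 1) * (τ - μ₂ - μ₁)))
          else 0)
          = fun m : ℕ =>
          if m = n then
            2 * π * (2 * (ρ₁ * ρ₂) ^ (n + 1) * Real.cos (((n : ℝ) + 1) * (τ - μ₂ - μ₁)))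
          else 0 := funext fun m => by simp [eq_comm]
      rw [this]
      exact (hasSum_ite_eq n _).summable
    rw [Summable.tsum_prod' hgsum hinner]
    have hdiag : ∀ n : ℕ, (∑' m : ℕ,
        if n = m then
          2 * π * (2 * (ρ₁ * ρ₂) ^ (n + 1) * Real.cos (((n : ℝ) + 1) * (τ - μ₂ - μ₁)))
        else 0)
        = 2 * π * (2 * (ρ₁ * ρ₂) ^ (n + 1) * Real.cos (((n : ℝ) + 1) * (τ - μ₂ - μ₁))) := by
      intro n
      rw [tsum_eq_single n (fun m hm => if_neg fun h => hm h.symm), if_pos rfl]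
    rw [tsum_congr hdiag, tsum_mul_left,
      (poisson_hasSum h30 h31 (τ - μ₂ - μ₁)).tsum_eq]
  -- put the pieces together
  rw [intervalIntegral.integral_congr
    (g := fun θ => 1 + (pker ρ₁ (θ - μ₁) - 1) + (pker ρ₂ (τ - μ₂ - θ) - 1)
      + (pker ρ₁ (θ - μ₁) - 1) * (pker ρ₂ (τ - μ₂ - θ) - 1))
    (fun θ _ => by dsimp only; ring)]
  have hiA : IntervalIntegrable (fun θ : ℝ => pker ρ₁ (θ - μ₁) - 1) volume (-π) π :=
    (hc1.sub continuous_const).intervalIntegrable _ _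
  have hiB : IntervalIntegrable (fun θ : ℝ => pker ρ₂ (τ - μ₂ - θ) - 1) volume (-π) π :=
    (hc2.sub continuous_const).intervalIntegrable _ _
  have hiAB : IntervalIntegrable
      (fun θ : ℝ => (pker ρ₁ (θ - μ₁) - 1) * (pker ρ₂ (τ - μ₂ - θ) - 1)) volume (-π) π :=
    ((hc1.sub continuous_const).mul (hc2.sub continuous_const)).intervalIntegrable _ _
  rw [intervalIntegral.integral_add ((intervalIntegrable_const.add hiA).add hiB) hiAB,
    intervalIntegral.integral_add (intervalIntegrable_const.add hiA) hiB,
    intervalIntegral.integral_add intervalIntegrable_const hiA,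
    h1val, hIA, hIB, hIAB]
  -- final algebra
  unfold wc pker
  rw [show τ - (μ₁ + μ₂) = τ - μ₂ - μ₁ by ring]
  have hD3 := denom_pos h30 h31 (τ - μ₂ - μ₁)
  field_simp
  ring
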